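/- Monotone resolution of Maybe cells: in the Evaluator Machine for □_{[t1,t2]} α, every queue cell's value, once set to ⊤ or ⊥, is never changed back to M or to the other definite value while it remains in the queue; formally, for all times t and indices k < length, if Q^t[k] ∈ {⊤,⊥} then Q^{t+1}[k+1] = Q^t[k]. -/
import Mathlib


/-- Queue cell values: `⊤`, `⊥`, or `Maybe`. -/
inductive Cell : Type
  | top : Cell
  | bot : Cell
  | maybe : Cell
deriving DecidableEq

/-- `run step i` is the queue contents after performing the steps of times `0, 1, …, i`
starting from the empty queue. -/
def run (step : ℕ → List Cell → List Cell) : ℕ → List Cell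
  | 0 => step 0 []
  | i + 1 => step (i + 1) (run step i)

/-- Set every cell with index in `[a, b]` to `v`. -/
def setRange (a b : ℕ) (v : Cell) (q : List Cell) : List Cell :=
  q.mapIdx fun j c => if a ≤ j ∧ j ≤ b then v else c

/-- Set the cell at index `k` to `v`, but only if its current value is `Maybe`. -/
def setIfMaybe (k : ℕ) (v : Cell) (q : List Cell) : List Cell :=
  q.mapIdx fun j c => if j = k ∧ c = Cell.maybe then v else c

/-- Set every cell with index in `[a, b]` whose current value is `Maybe` to `v`. -/
def setRangeIfMaybe (a b : ℕ) (v : Cell) (q : List Cell) : List Cell :=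
  q.mapIdx fun j c => if (a ≤ j ∧ j ≤ b) ∧ c = Cell.maybe then v else c

/-- One step of the Evaluator Machine for `□_{[t1,t2]} α` at time `i`: prepend `Maybe`;
if `α` holds at time `i`, set the cell at index `t2` to `⊤` only if it is `Maybe`;
if `α` fails at time `i`, set all cells with indices in `[t1, t2]` to `⊥`.
Cells at indices `> t2` are never modified. -/
def boxStep (α : ℕ → Bool) (t1 t2 : ℕ) (i : ℕ) (q : List Cell) : List Cell :=
  let q' := Cell.maybe :: q
  if α i then setIfMaybe t2 Cell.top q' else setRange t1 t2 Cell.bot q'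

lemma top_index_ge (α : ℕ → Bool) (t1 t2 : ℕ) :
    ∀ t k, (run (boxStep α t1 t2) t)[k]? = some Cell.top → t2 ≤ k := by
  intro t
  induction t with
  | zero =>
      intro k h
      simp only [run, boxStep] at h
      split at h
      · simp only [setIfMaybe, List.getElem?_mapIdx] at h
        cases k with
        | zero =>
            simp only [List.getElem?_cons_zero, Option.map_some] at h
            split at h
            · omega
            · simp_all
        | succ k' =>
            simp only [List.getElem?_cons_succ, List.getElem?_nil] at h
            simp at h
      · simp only [setRange, List.getElem?_mapIdx] at h
        cases k with
        | zero =>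
            simp only [List.getElem?_cons_zero, Option.map_some] at h
            split at h <;> simp_all
        | succ k' =>
            simp only [List.getElem?_cons_succ, List.getElem?_nil] at h
            simp at h
  | succ t ih =>
      intro k h
      simp only [run, boxStep] at h
      split at h
      · simp only [setIfMaybe, List.getElem?_mapIdx] at h
        cases k with
        | zero =>
            simp only [List.getElem?_cons_zero, Option.map_some] at h
            split at h
            · omega
            · simp_all
        | succ k' =>
            simp only [List.getElem?_cons_succ] at h
            cases hq : (run (boxStep α t1 t2) t)[k']? with
            | none => simp [hq] at h
            | some c =>
                simp only [hq, Option.map_some, Option.some.injEq] at h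
                split at h
                · omega
                · subst h
                  have := ih k' hq
                  omega
      · simp only [setRange, List.getElem?_mapIdx] at h
        cases k with
        | zero =>
            simp only [List.getElem?_cons_zero, Option.map_some] at h
            split at h <;> simp_all
        | succ k' =>
            simp only [List.getElem?_cons_succ] at h
            cases hq : (run (boxStep α t1 t2) t)[k']? with
            | none => simp [hq] at h
            | some c =>
                simp only [hq, Option.map_some, Option.some.injEq] at h
                split at h
                · simp_all
                · subst h
                  have := ih k' hq
                  omega

/-- Monotone resolution of `Maybe` cells in the Box Evaluator Machine: once a queue
cell holds a definite value (`⊤` or `⊥`), that value is preserved (shifted up by one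
index) at the next time step: if `Q^t[k] ∈ {⊤, ⊥}` then `Q^{t+1}[k+1] = Q^t[k]`. -/
theorem box_EM_definite_preserved (α : ℕ → Bool) (t1 t2 : ℕ) (h12 : t1 ≤ t2)
    (t k : ℕ) (c : Cell) (hc : (run (boxStep α t1 t2) t)[k]? = some c)
    (hdef : c ≠ Cell.maybe) :
    (run (boxStep α t1 t2) (t + 1))[k + 1]? = some c := by
  have hq1 : (Cell.maybe :: run (boxStep α t1 t2) t)[k + 1]? = some c := by
    simpa using hc
  have htop : c = Cell.top → t2 ≤ k := fun h => top_index_ge α t1 t2 t k (h ▸ hc)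
  show (boxStep α t1 t2 (t + 1) (run (boxStep α t1 t2) t))[k + 1]? = some c
  simp only [boxStep]
  split
  · simp only [setIfMaybe, List.getElem?_mapIdx, hq1, Option.map_some,
      Option.some.injEq]
    split
    · exact absurd (by tauto) hdef
    · rfl
  · simp only [setRange, List.getElem?_mapIdx, hq1, Option.map_some,
      Option.some.injEq]
    split
    · rename_i hrange
      cases c with
      | top => exact absurd (htop rfl) (by omega)
      | bot => rfl
      | maybe => exact absurd rfl hdef
    · rfl
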